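/- For any connected closed 4-coloured graph 𝒢 and any two distinct colours ℓ, ℓ' ∈ {1,2,3,4}, one has |B_{ℓ'}| + |B_ℓ| − Σ_{b∈B_ℓ} |V_b(ℓ')| ≤ 1. -/

import Mathlib

/-- A closed `k`-coloured graph: a finite bipartite `k`-regular graph whose lines carry
colours in `Fin k`, each node meeting exactly one line of each colour.  It is encoded by a
finite node set together with, for each colour, a fixed-point-free involutive pairing
(perfect matching) exchanging the two node classes (`sign`). -/
structure ColouredGraph (k : ℕ) where
  /-- the nodes of the graph -/
  V : Type
  fintypeV : Fintype V
  /-- the bipartition of the nodes (black/white) -/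
  sign : V → Bool
  /-- `adj c v` is the node joined to `v` by the line of colour `c` at `v` -/
  adj : Fin k → V → V
  adj_invol : ∀ c, Function.Involutive (adj c)
  adj_ne : ∀ c v, adj c v ≠ v
  adj_sign : ∀ c v, sign (adj c v) = ! sign v

namespace ColouredGraph

variable {k : ℕ} (G : ColouredGraph k)

instance : Fintype G.V := G.fintypeV

/-- One step along a line whose colour lies in `S`. -/
def Step (S : Set (Fin k)) (v w : G.V) : Prop := ∃ c ∈ S, G.adj c v = w

/-- Reachability using only lines whose colours lie in `S`. -/
def Reach (S : Set (Fin k)) : G.V → G.V → Prop := Relation.ReflTransGen (G.Step S)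

/-- The connected components of the subgraph of `G` formed by the lines whose colours
lie in `S`.  For `S = {ℓ}ᶜ` these are the bubbles of colour `ℓ`; for a pair
`S = {i,j}` these are the faces of colours `(ij)` (bicoloured cycles); for a triple these
are the subgraphs dual to simplicial edges (in 4d). -/
def Component (S : Set (Fin k)) : Type := Quot (G.Reach S)

instance (S : Set (Fin k)) : Finite (G.Component S) := Quot.finite _

/-- The number of connected components of the subgraph with colours in `S`. -/
noncomputable def numComponents (S : Set (Fin k)) : ℕ := Nat.card (G.Component S)

/-- `G` is connected. -/
def Connected : Prop := ∀ v w : G.V, G.Reach Set.univ v w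

/-- The number of nodes of `G` lying in the component `b`. -/
noncomputable def nodesIn (S : Set (Fin k)) (b : G.Component S) : ℕ :=
  Nat.card {v : G.V // Quot.mk (G.Reach S) v = b}

/-- The component `x` of the subgraph with colours in `S'` lies inside the component
`b` of the subgraph with colours in `S` (intended for `S' ⊆ S`). -/
def MemIn {S S' : Set (Fin k)} (x : G.Component S') (b : G.Component S) : Prop :=
  ∃ v : G.V, Quot.mk (G.Reach S') v = x ∧ Quot.mk (G.Reach S) v = b

/-- The number of components of the subgraph with colours in `S'` contained in the
component `b` of the subgraph with colours in `S` (intended for `S' ⊆ S`). -/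
noncomputable def countIn (S S' : Set (Fin k)) (b : G.Component S) : ℕ :=
  Nat.card {x : G.Component S' // G.MemIn x b}

/-- The lines of the subgraph with colours in `S` lying in the component `b`: pairs
`(v, c)` with `c ∈ S` and `v` a node of `b`, two such pairs being identified when they
describe the same line. -/
def LineIn (S : Set (Fin k)) (b : G.Component S) : Type :=
  Quot (fun p q : {x : G.V × Fin k // x.2 ∈ S ∧ Quot.mk (G.Reach S) x.1 = b} =>
    p.1.2 = q.1.2 ∧ (q.1.1 = p.1.1 ∨ q.1.1 = G.adj p.1.2 p.1.1))

instance (S : Set (Fin k)) (b : G.Component S) : Finite (G.LineIn S b) := Quot.finite _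

/-- The number of lines of the component `b` of the subgraph with colours in `S`. -/
noncomputable def linesIn (S : Set (Fin k)) (b : G.Component S) : ℕ :=
  Nat.card (G.LineIn S b)

/-- The lines of `G`: pairs `(v, c)`, identified when describing the same line. -/
def Line : Type :=
  Quot (fun p q : G.V × Fin k =>
    p.2 = q.2 ∧ (q.1 = p.1 ∨ q.1 = G.adj p.2 p.1))

instance : Finite G.Line := Quot.finite _

/-- The number of lines of `G` (equal to `k·𝒩/2`). -/
noncomputable def numLines : ℕ := Nat.card G.Line


end ColouredGraph


namespace BVAux

open SimpleGraph

variable {A B Z : Type} (p : Z → A) (q : Z → B)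

/-- The bipartite multigraph (collapsed to a simple graph) with vertex set `A ⊕ B` and an
edge for each `z : Z` joining `p z` and `q z`. -/
def H : SimpleGraph (A ⊕ B) where
  Adj x y := x ≠ y ∧ ∃ z, (x = Sum.inl (p z) ∧ y = Sum.inr (q z)) ∨
      (y = Sum.inl (p z) ∧ x = Sum.inr (q z))
  symm := by
    refine ⟨?_⟩; rintro x y ⟨hne, z, hz⟩
    exact ⟨hne.symm, z, hz.symm⟩
  loopless := by refine ⟨?_⟩; rintro x ⟨hne, -⟩; exact hne rfl

lemma card_bound [Finite A] [Finite B] [Finite Z] (hconn : (H p q).Connected) :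
    Nat.card A + Nat.card B ≤ Nat.card Z + 1 := by
  classical
  obtain ⟨w0⟩ : Nonempty (A ⊕ B) := hconn.nonempty
  set HG := H p q with hHG
  have key : ∀ v : A ⊕ B, v ≠ w0 → ∃ z : Z,
      (v = Sum.inl (p z) ∧ HG.dist (Sum.inr (q z)) w0 < HG.dist v w0) ∨
      (v = Sum.inr (q z) ∧ HG.dist (Sum.inl (p z)) w0 < HG.dist v w0) := by
    intro v hv
    have hpos : 0 < HG.dist v w0 := hconn.pos_dist_of_ne hv
    obtain ⟨w, hw⟩ := hconn.exists_walk_length_eq_dist v w0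
    cases w with
    | nil => simp at hpos
    | @cons _ u _ hadj rest =>
      have hlt : HG.dist u w0 < HG.dist v w0 := by
        have := HG.dist_le rest
        simp [SimpleGraph.Walk.length_cons] at hw
        omega
      obtain ⟨-, z, hz | hz⟩ := hadj
      · exact ⟨z, Or.inl ⟨hz.1, hz.2 ▸ hlt⟩⟩
      · exact ⟨z, Or.inr ⟨hz.2, hz.1 ▸ hlt⟩⟩
  choose f hf using fun v : {v : A ⊕ B // v ≠ w0} => key v.1 v.2
  have hinj : Function.Injective f := by
    intro v1 v2 heq
    by_contra hne12
    have h1 := hf v1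
    have h2 := hf v2
    rw [heq] at h1
    rcases h1 with ⟨hv1, hd1⟩ | ⟨hv1, hd1⟩ <;> rcases h2 with ⟨hv2, hd2⟩ | ⟨hv2, hd2⟩
    · exact hne12 (Subtype.ext (hv1.trans hv2.symm))
    · rw [← hv2] at hd1; rw [← hv1] at hd2; omega
    · rw [← hv2] at hd1; rw [← hv1] at hd2; omega
    · exact hne12 (Subtype.ext (hv1.trans hv2.symm))
  have hle : Nat.card {v : A ⊕ B // v ≠ w0} ≤ Nat.card Z :=
    Nat.card_le_card_of_injective f hinj
  have hcard : Nat.card (A ⊕ B) =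
      Nat.card {v : A ⊕ B // v = w0} + Nat.card {v : A ⊕ B // v ≠ w0} := by
    rw [← Nat.card_sum]
    exact Nat.card_congr (Equiv.sumCompl (· = w0)).symm
  have hone : Nat.card {v : A ⊕ B // v = w0} = 1 := by
    rw [Nat.card_eq_one_iff_unique]
    exact ⟨⟨fun a b => Subtype.ext (a.2.trans b.2.symm)⟩, ⟨w0, rfl⟩⟩
  have := Nat.card_sum (α := A) (β := B)
  omega

end BVAux

namespace BVAux

open ColouredGraph

variable {k : ℕ} (G : ColouredGraph k)

lemma reach_mono {S S' : Set (Fin k)} (h : S' ⊆ S) {v w : G.V} (hr : G.Reach S' v w) :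
    G.Reach S v w :=
  Relation.ReflTransGen.mono (r := G.Step S') (p := G.Step S) (fun _ _ hs => hs.imp fun c hc => ⟨h hc.1, hc.2⟩) _ _ hr

/-- The induced map on components when enlarging the colour set. -/
def mapC {S S' : Set (Fin k)} (h : S' ⊆ S) : G.Component S' → G.Component S :=
  Quot.lift (Quot.mk _) fun _ _ hvw => Quot.sound (reach_mono G h hvw)

end BVAux


open ColouredGraph in
/-- for any connected closed 4-coloured graph `𝒢` and any two distinct
colours `ℓ, ℓ'` one has `|B_{ℓ'}| + |B_ℓ| − Σ_{b∈B_ℓ} |V_b(ℓ')| ≤ 1`.  Here `B_ℓ` is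
the set of bubbles of colour `ℓ` (components after deleting the lines of colour `ℓ`) and
`V_b(ℓ')` is the set of vertices of colour `ℓ'` of the bubble `b`, i.e. the bicoloured
faces of `b` whose colour pair is `{1,2,3,4} ∖ {ℓ,ℓ'}`. -/
theorem bubble_vertex_inequality_3d (G : ColouredGraph 4) (hG : G.Connected)
    (ℓ ℓ' : Fin 4) (h : ℓ ≠ ℓ') :
    G.numComponents {ℓ'}ᶜ + G.numComponents {ℓ}ᶜ
      ≤ 1 + ∑ᶠ b : G.Component {ℓ}ᶜ, G.countIn {ℓ}ᶜ ({ℓ, ℓ'}ᶜ) b := by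
  classical
  cases isEmpty_or_nonempty G.V with
  | inl hemp =>
    have e1 : IsEmpty (G.Component ({ℓ'}ᶜ : Set (Fin 4))) :=
      ⟨fun x => by obtain ⟨v, -⟩ := Quot.exists_rep x; exact hemp.elim v⟩
    have e2 : IsEmpty (G.Component ({ℓ}ᶜ : Set (Fin 4))) :=
      ⟨fun x => by obtain ⟨v, -⟩ := Quot.exists_rep x; exact hemp.elim v⟩
    have z1 : G.numComponents {ℓ'}ᶜ = 0 := Nat.card_of_isEmpty
    have z2 : G.numComponents {ℓ}ᶜ = 0 := Nat.card_of_isEmpty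
    rw [z1, z2]
    exact Nat.zero_le _
  | inr hne =>
    have h1 : ({ℓ, ℓ'}ᶜ : Set (Fin 4)) ⊆ {ℓ}ᶜ :=
      Set.compl_subset_compl.mpr (by intro x hx; simp_all)
    have h2 : ({ℓ, ℓ'}ᶜ : Set (Fin 4)) ⊆ {ℓ'}ᶜ :=
      Set.compl_subset_compl.mpr (by intro x hx; simp_all)
    set p := BVAux.mapC G h1 with hp
    set q := BVAux.mapC G h2 with hq
    have bridge : ∀ v : G.V, (BVAux.H p q).Adj
        (Sum.inl (Quot.mk (G.Reach {ℓ}ᶜ) v)) (Sum.inr (Quot.mk (G.Reach {ℓ'}ᶜ) v)) :=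
      fun v => ⟨Sum.inl_ne_inr, Quot.mk _ v, Or.inl ⟨rfl, rfl⟩⟩
    have walkA : ∀ v w : G.V, G.Reach Set.univ v w →
        (BVAux.H p q).Reachable (Sum.inl (Quot.mk (G.Reach {ℓ}ᶜ) v))
          (Sum.inl (Quot.mk (G.Reach {ℓ}ᶜ) w)) := by
      intro v w hvw
      induction hvw with
      | refl => exact SimpleGraph.Reachable.refl _
      | @tail bv cv _ hstep ih =>
        obtain ⟨cl, -, hadj⟩ := hstep
        by_cases hc : cl = ℓ
        · have hc' : cl ≠ ℓ' := hc.symm ▸ h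
          have hB : (Quot.mk (G.Reach {ℓ'}ᶜ) bv : G.Component {ℓ'}ᶜ)
              = (Quot.mk (G.Reach {ℓ'}ᶜ) cv : G.Component {ℓ'}ᶜ) :=
            Quot.sound (Relation.ReflTransGen.single (r := G.Step {ℓ'}ᶜ)
              ⟨cl, Set.mem_compl_singleton_iff.mpr hc', hadj⟩)
          exact ih.trans ((bridge bv).reachable.trans
            (hB ▸ (bridge cv).symm.reachable))
        · have hA : (Quot.mk (G.Reach {ℓ}ᶜ) bv : G.Component {ℓ}ᶜ)
              = (Quot.mk (G.Reach {ℓ}ᶜ) cv : G.Component {ℓ}ᶜ) :=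
            Quot.sound (Relation.ReflTransGen.single (r := G.Step {ℓ}ᶜ)
              ⟨cl, Set.mem_compl_singleton_iff.mpr hc, hadj⟩)
          exact hA ▸ ih
    have toA : ∀ x : G.Component ({ℓ}ᶜ : Set (Fin 4)) ⊕ G.Component ({ℓ'}ᶜ : Set (Fin 4)),
        ∃ v : G.V, (BVAux.H p q).Reachable x (Sum.inl (Quot.mk (G.Reach {ℓ}ᶜ) v)) := by
      intro x
      cases x with
      | inl a =>
        obtain ⟨v, rfl⟩ := Quot.exists_rep a
        exact ⟨v, SimpleGraph.Reachable.refl _⟩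
      | inr b =>
        obtain ⟨v, rfl⟩ := Quot.exists_rep b
        exact ⟨v, (bridge v).symm.reachable⟩
    have hconn : (BVAux.H p q).Connected := by
      rw [SimpleGraph.connected_iff]
      refine ⟨fun x y => ?_, ⟨Sum.inl (Quot.mk _ (Classical.arbitrary G.V))⟩⟩
      obtain ⟨v, hx⟩ := toA x
      obtain ⟨w, hy⟩ := toA y
      exact hx.trans ((walkA v w (hG v w)).trans hy.symm)
    have hmain := BVAux.card_bound p q hconn
    have hmem : ∀ (x : G.Component ({ℓ, ℓ'}ᶜ : Set (Fin 4)))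
        (b : G.Component ({ℓ}ᶜ : Set (Fin 4))), G.MemIn x b ↔ p x = b := by
      intro x b
      constructor
      · rintro ⟨v, rfl, rfl⟩; rfl
      · rintro rfl
        obtain ⟨v, rfl⟩ := Quot.exists_rep x
        exact ⟨v, rfl, rfl⟩
    have hsum : ∑ᶠ b : G.Component {ℓ}ᶜ, G.countIn {ℓ}ᶜ ({ℓ, ℓ'}ᶜ) b
        = Nat.card (G.Component ({ℓ, ℓ'}ᶜ : Set (Fin 4))) := by
      letI : Fintype (G.Component ({ℓ}ᶜ : Set (Fin 4))) := Fintype.ofFinite _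
      letI : Fintype (G.Component ({ℓ, ℓ'}ᶜ : Set (Fin 4))) := Fintype.ofFinite _
      rw [finsum_eq_sum_of_fintype]
      have heach : ∀ b, G.countIn {ℓ}ᶜ ({ℓ, ℓ'}ᶜ) b = Nat.card {x // p x = b} := fun b =>
        Nat.card_congr (Equiv.subtypeEquivRight fun x => hmem x b)
      simp_rw [heach, Nat.card_eq_fintype_card]
      rw [← Fintype.card_sigma, Fintype.card_congr (Equiv.sigmaFiberEquiv p)]
    rw [hsum]
    show Nat.card _ + Nat.card _ ≤ _
    omega
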